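/- For all real numbers b ≥ b' ≥ π, the integral C₀⁻(b,b') = ∫₀^∞ t(1 - e^{-t}) / ((t² + b²)(t² + b'²)) dt satisfies C₀⁻(b,b') ≤ (log b - log b')/(b² - b'²), where for b = b' the right-hand side is interpreted as its limit 1/(2b²). -/

import Mathlib

open Real MeasureTheory Set Filter

-- auxiliary: derivative in equal case
lemma aux_deriv_eq (b : ℝ) (hb : 0 < b) (t : ℝ) :
    HasDerivAt (fun t : ℝ => -1 / (2 * (t ^ 2 + b ^ 2)))
      (t / ((t ^ 2 + b ^ 2) * (t ^ 2 + b ^ 2))) t := by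
  have hd : 0 < t ^ 2 + b ^ 2 := by positivity
  have h1 : HasDerivAt (fun t : ℝ => 2 * (t ^ 2 + b ^ 2)) (2 * (2 * t)) t := by
    have := ((hasDerivAt_pow 2 t).add_const (b ^ 2)).const_mul 2
    simpa using this
  have h2 := (hasDerivAt_const t (-1 : ℝ)).div h1 (by positivity)
  convert h2 using 1
  · rfl
  · rfl
  · rfl
  field_simp
  ring

lemma aux_deriv_ne (b b' : ℝ) (hb : 0 < b) (hb' : 0 < b') (hne : b ≠ b') (t : ℝ) :
    HasDerivAt (fun t : ℝ =>
        (Real.log (t ^ 2 + b' ^ 2) - Real.log (t ^ 2 + b ^ 2)) / (2 * (b ^ 2 - b' ^ 2)))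
      (t / ((t ^ 2 + b ^ 2) * (t ^ 2 + b' ^ 2))) t := by
  have hd : (0:ℝ) < t ^ 2 + b ^ 2 := by positivity
  have hd' : (0:ℝ) < t ^ 2 + b' ^ 2 := by positivity
  have hbb : b ^ 2 - b' ^ 2 ≠ 0 := by
    intro h
    apply hne
    nlinarith [sq_nonneg (b - b'), sq_nonneg (b + b')]
  have h1 : HasDerivAt (fun t : ℝ => t ^ 2 + b ^ 2) (2 * t) t := by
    simpa using (hasDerivAt_pow 2 t).add_const (b ^ 2)
  have h1' : HasDerivAt (fun t : ℝ => t ^ 2 + b' ^ 2) (2 * t) t := by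
    simpa using (hasDerivAt_pow 2 t).add_const (b' ^ 2)
  have h2 := ((h1'.log hd'.ne').sub (h1.log hd.ne')).div_const (2 * (b ^ 2 - b' ^ 2))
  convert h2 using 1
  · rfl
  · rfl
  · rfl
  field_simp
  ring

lemma aux_tendsto_denom (b : ℝ) : Tendsto (fun t : ℝ => t ^ 2 + b ^ 2) atTop atTop :=
  tendsto_atTop_add_const_right _ _ (tendsto_pow_atTop two_ne_zero)

lemma aux_tendsto_eq (b : ℝ) (hb : 0 < b) :
    Tendsto (fun t : ℝ => -1 / (2 * (t ^ 2 + b ^ 2))) atTop (nhds 0) := by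
  have h : Tendsto (fun t : ℝ => 2 * (t ^ 2 + b ^ 2)) atTop atTop :=
    (aux_tendsto_denom b).const_mul_atTop two_pos
  simpa using tendsto_const_nhds.div_atTop (f := fun _ : ℝ => (-1 : ℝ)) h

lemma aux_tendsto_ne (b b' : ℝ) (hb : 0 < b) (hb' : 0 < b') (hbb : b ^ 2 - b' ^ 2 ≠ 0) :
    Tendsto (fun t : ℝ =>
        (Real.log (t ^ 2 + b' ^ 2) - Real.log (t ^ 2 + b ^ 2)) / (2 * (b ^ 2 - b' ^ 2)))
      atTop (nhds 0) := by
  have hratio : Tendsto (fun t : ℝ => (t ^ 2 + b' ^ 2) / (t ^ 2 + b ^ 2)) atTop (nhds 1) := by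
    have h0 : Tendsto (fun t : ℝ => (b' ^ 2 - b ^ 2) / (t ^ 2 + b ^ 2)) atTop (nhds 0) :=
      tendsto_const_nhds.div_atTop (aux_tendsto_denom b)
    have := h0.const_add (1 : ℝ)
    rw [add_zero] at this
    refine this.congr fun t => ?_
    have hd : (0:ℝ) < t ^ 2 + b ^ 2 := by positivity
    field_simp
    ring
  have hlog : Tendsto (fun t : ℝ => Real.log ((t ^ 2 + b' ^ 2) / (t ^ 2 + b ^ 2)))
      atTop (nhds 0) := by
    simpa using hratio.log one_ne_zero
  have : Tendsto (fun t : ℝ => Real.log (t ^ 2 + b' ^ 2) - Real.log (t ^ 2 + b ^ 2))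
      atTop (nhds 0) := by
    refine hlog.congr fun t => ?_
    have hd : (0:ℝ) < t ^ 2 + b ^ 2 := by positivity
    have hd' : (0:ℝ) < t ^ 2 + b' ^ 2 := by positivity
    rw [Real.log_div hd'.ne' hd.ne']
  simpa using this.div_const (2 * (b ^ 2 - b' ^ 2))

lemma aux_integral (b b' : ℝ) (hbb : b' ≤ b) (hb' : 0 < b') :
    (∫ t in Ioi (0 : ℝ), t / ((t ^ 2 + b ^ 2) * (t ^ 2 + b' ^ 2))) =
      (if b = b' then 1 / (2 * b ^ 2)
      else (Real.log b - Real.log b') / (b ^ 2 - b' ^ 2)) ∧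
    IntegrableOn (fun t : ℝ => t / ((t ^ 2 + b ^ 2) * (t ^ 2 + b' ^ 2))) (Ioi 0) := by
  have hb : 0 < b := lt_of_lt_of_le hb' hbb
  have gpos : ∀ x ∈ Ioi (0:ℝ), 0 ≤ x / ((x ^ 2 + b ^ 2) * (x ^ 2 + b' ^ 2)) := by
    intro x hx
    have : (0:ℝ) < x := hx
    positivity
  by_cases h : b = b'
  · subst h
    simp only [if_pos rfl]
    have hderiv : ∀ x ∈ Ici (0:ℝ), HasDerivAt (fun t : ℝ => -1 / (2 * (t ^ 2 + b ^ 2)))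
        (x / ((x ^ 2 + b ^ 2) * (x ^ 2 + b ^ 2))) x := fun x _ => aux_deriv_eq b hb x
    constructor
    · rw [integral_Ioi_of_hasDerivAt_of_nonneg' hderiv gpos (aux_tendsto_eq b hb)]
      have : (0:ℝ)^2 + b^2 = b^2 := by ring
      rw [this]
      simp only [if_true]
      field_simp
      ring
    · exact integrableOn_Ioi_deriv_of_nonneg' hderiv gpos (aux_tendsto_eq b hb)
  · have hlt : b' < b := lt_of_le_of_ne hbb (Ne.symm h)
    have hbb2 : b ^ 2 - b' ^ 2 ≠ 0 := by nlinarith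
    simp only [if_neg h]
    have hderiv : ∀ x ∈ Ici (0:ℝ), HasDerivAt (fun t : ℝ =>
        (Real.log (t ^ 2 + b' ^ 2) - Real.log (t ^ 2 + b ^ 2)) / (2 * (b ^ 2 - b' ^ 2)))
        (x / ((x ^ 2 + b ^ 2) * (x ^ 2 + b' ^ 2))) x := fun x _ => aux_deriv_ne b b' hb hb' h x
    constructor
    · rw [integral_Ioi_of_hasDerivAt_of_nonneg' hderiv gpos (aux_tendsto_ne b b' hb hb' hbb2)]
      simp only [zero_sub]
      rw [show (0:ℝ) ^ 2 + b' ^ 2 = b' ^ 2 by ring, show (0:ℝ) ^ 2 + b ^ 2 = b ^ 2 by ring,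
        Real.log_pow, Real.log_pow]
      field_simp
      ring
    · exact integrableOn_Ioi_deriv_of_nonneg' hderiv gpos (aux_tendsto_ne b b' hb hb' hbb2)

/-- For all `b ≥ b' ≥ π`, `C₀⁻(b,b') = ∫₀^∞ t(1-e^{-t})/((t²+b²)(t²+b'²)) dt`
satisfies `C₀⁻(b,b') ≤ (log b - log b')/(b² - b'²)`, where for `b = b'` the
right-hand side is interpreted as its limit `1/(2b²)`. -/
theorem stmt_1 (b b' : ℝ) (hbb : b' ≤ b) (hb' : π ≤ b') :
    ∫ t in Ioi (0 : ℝ), t * (1 - Real.exp (-t)) / ((t ^ 2 + b ^ 2) * (t ^ 2 + b' ^ 2)) ≤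
      if b = b' then 1 / (2 * b ^ 2)
      else (Real.log b - Real.log b') / (b ^ 2 - b' ^ 2) := by
  have hb'0 : 0 < b' := lt_of_lt_of_le Real.pi_pos hb'
  have hb0 : 0 < b := lt_of_lt_of_le hb'0 hbb
  obtain ⟨hval, hint⟩ := aux_integral b b' hbb hb'0
  rw [← hval]
  have hle : ∀ x ∈ Ioi (0:ℝ), x * (1 - Real.exp (-x)) / ((x ^ 2 + b ^ 2) * (x ^ 2 + b' ^ 2)) ≤
      x / ((x ^ 2 + b ^ 2) * (x ^ 2 + b' ^ 2)) := by
    intro x hx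
    have hx0 : (0:ℝ) < x := hx
    have hd : (0:ℝ) < (x ^ 2 + b ^ 2) * (x ^ 2 + b' ^ 2) := by positivity
    gcongr
    nlinarith [Real.exp_pos (-x)]
  have hcont : Continuous fun t : ℝ =>
      t * (1 - Real.exp (-t)) / ((t ^ 2 + b ^ 2) * (t ^ 2 + b' ^ 2)) := by
    apply Continuous.div (by continuity) (by continuity)
    intro x; positivity
  have hint2 : IntegrableOn
      (fun t : ℝ => t * (1 - Real.exp (-t)) / ((t ^ 2 + b ^ 2) * (t ^ 2 + b' ^ 2))) (Ioi 0) := by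
    refine hint.mono' hcont.aestronglyMeasurable.restrict ?_
    filter_upwards [ae_restrict_mem measurableSet_Ioi] with x hx
    have hx0 : (0:ℝ) < x := hx
    have hnn : 0 ≤ x * (1 - Real.exp (-x)) / ((x ^ 2 + b ^ 2) * (x ^ 2 + b' ^ 2)) := by
      have h1 : Real.exp (-x) ≤ 1 := Real.exp_le_one_iff.mpr (by linarith)
      have : 0 ≤ 1 - Real.exp (-x) := by linarith
      positivity
    rw [Real.norm_eq_abs, abs_of_nonneg hnn]
    exact hle x hx
  exact setIntegral_mono_on hint2 hint measurableSet_Ioi hle
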